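/- arXiv:2411.00320 — 5 statements merged into one kernel-verified Lean document; each statement's English description precedes it below -/
import Mathlib

section
/- Let N ≥ 3 be an integer and let 0 < R₁ < R₂. Set a := (R₁² − R₂²)/(2N(R₁^{2−N} − R₂^{2−N})) and b := R₁²R₂²(R₁^{−N} − R₂^{−N})/(2N(R₁^{2−N} − R₂^{2−N})), and let U(r) := a·r^{2−N} + b − r²/(2N). Then −U'(R₁) ≠ U'(R₂); that is, the outward normal derivative of the corresponding radial function u(x) = U(|x|) on the inner sphere {|x| = R₁} differs from its outward normal derivative on the outer sphere {|x| = R₂}. -/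
private lemma annulus_term_lt (x y : ℝ) (hx : 0 < x) (hxy : x < y) (m i : ℕ) (hi : i < m) :
    x ^ (m - i) * y ^ (i + 1) + x ^ (i + 1) * y ^ (m - i) < x ^ (m + 1) + y ^ (m + 1) := by
  have hp : 0 < (y ^ (i+1) - x ^ (i+1)) * (y ^ (m-i) - x ^ (m-i)) := by
    apply mul_pos <;> · simp only [sub_pos]; exact pow_lt_pow_left₀ hxy hx.le (by omega)
  have h1 : x ^ (i+1) * x ^ (m-i) = x ^ (m+1) := by rw [← pow_add]; congr 1; omega
  have h2 : y ^ (i+1) * y ^ (m-i) = y ^ (m+1) := by rw [← pow_add]; congr 1; omega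
  nlinarith [hp]

private lemma annulus_key (m : ℕ) (hm : 1 ≤ m) (x y : ℝ) (hx : 0 < x) (hxy : x < y) :
    2 * x * y * (y ^ m - x ^ m) < m * (y - x) * (x ^ (m+1) + y ^ (m+1)) := by
  have hgeom : y ^ m - x ^ m = (y - x) * ∑ i ∈ Finset.range m, y ^ i * x ^ (m - 1 - i) := by
    rw [← geom_sum₂_mul y x m]; ring
  have hsum : ∑ i ∈ Finset.range m, (x ^ (m - i) * y ^ (i + 1) + x ^ (i + 1) * y ^ (m - i))
      < ∑ i ∈ Finset.range m, (x ^ (m + 1) + y ^ (m + 1)) := by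
    apply Finset.sum_lt_sum_of_nonempty (by simp; omega)
    intro i hi
    exact annulus_term_lt x y hx hxy m i (Finset.mem_range.mp hi)
  have hrefl : ∑ i ∈ Finset.range m, x ^ (i + 1) * y ^ (m - i)
      = ∑ i ∈ Finset.range m, x ^ (m - i) * y ^ (i + 1) := by
    rw [← Finset.sum_range_reflect]
    apply Finset.sum_congr rfl
    intro i hi
    simp only [Finset.mem_range] at hi
    congr 2 <;> omega
  have hL : 2 * x * y * (∑ i ∈ Finset.range m, y ^ i * x ^ (m - 1 - i))
      = ∑ i ∈ Finset.range m, (x ^ (m - i) * y ^ (i + 1) + x ^ (i + 1) * y ^ (m - i)) := by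
    rw [Finset.mul_sum, Finset.sum_add_distrib, hrefl, ← Finset.sum_add_distrib]
    apply Finset.sum_congr rfl
    intro i hi
    simp only [Finset.mem_range] at hi
    have hxx : x ^ (m - 1 - i) * x = x ^ (m - i) := by rw [← pow_succ]; congr 1; omega
    calc 2 * x * y * (y ^ i * x ^ (m - 1 - i)) = 2 * (x ^ (m-1-i) * x * y ^ (i+1)) := by ring
      _ = 2 * (x ^ (m-i) * y ^ (i+1)) := by rw [hxx]
      _ = x ^ (m - i) * y ^ (i + 1) + x ^ (m-i) * y ^ (i + 1) := by ring
  have hy : 0 < y - x := by linarith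
  calc 2 * x * y * (y ^ m - x ^ m)
      = (y - x) * (2 * x * y * ∑ i ∈ Finset.range m, y ^ i * x ^ (m - 1 - i)) := by
        rw [hgeom]; ring
    _ < (y - x) * (∑ i ∈ Finset.range m, (x ^ (m + 1) + y ^ (m + 1))) := by
        apply mul_lt_mul_of_pos_left _ hy
        rw [hL]; exact hsum
    _ = m * (y - x) * (x ^ (m+1) + y ^ (m+1)) := by
        rw [Finset.sum_const, Finset.card_range]; ring

theorem annulus_normal_derivatives_differ_dim_ge_three (N : ℕ) (hN : 3 ≤ N)
    (R₁ R₂ : ℝ) (hR₁ : 0 < R₁) (hR₁₂ : R₁ < R₂) :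
    let a : ℝ := (R₁ ^ 2 - R₂ ^ 2) /
      (2 * N * (R₁ ^ (2 - (N : ℤ)) - R₂ ^ (2 - (N : ℤ))))
    let b : ℝ := R₁ ^ 2 * R₂ ^ 2 * (R₁ ^ (-(N : ℤ)) - R₂ ^ (-(N : ℤ))) /
      (2 * N * (R₁ ^ (2 - (N : ℤ)) - R₂ ^ (2 - (N : ℤ))))
    let U : ℝ → ℝ := fun r => a * r ^ (2 - (N : ℤ)) + b - r ^ 2 / (2 * N)
    (-deriv U R₁) ≠ deriv U R₂ := by
  intro a b U
  have hR₂ : 0 < R₂ := hR₁.trans hR₁₂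
  have hN0 : ((N:ℝ)) ≠ 0 := by
    have : (0:ℝ) < N := by exact_mod_cast (by omega : 0 < N)
    exact this.ne'
  have hderiv : ∀ r : ℝ, 0 < r →
      deriv U r = a * ((2-(N:ℤ)) * r ^ ((2-(N:ℤ))-1)) - r / N := by
    intro r hr
    have h1 := ((hasDerivAt_zpow (2-(N:ℤ)) r (Or.inl hr.ne')).const_mul a).add_const b
    have h2 := (hasDerivAt_pow 2 r).div_const (2*(N:ℝ))
    have h3 := (h1.sub h2).deriv
    rw [show U = ((fun x => a * x ^ (2 - (N:ℤ)) + b) - fun x => x ^ 2 / (2*(N:ℝ))) from rfl, h3]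
    have h4 : ((2:ℕ):ℝ) * r ^ (2-1) / (2*(N:ℝ)) = r / N := by
      push_cast; field_simp
    rw [h4]
    push_cast
    ring
  obtain ⟨m, rfl⟩ : ∃ m, N = m + 2 := ⟨N - 2, by omega⟩
  have hm : 1 ≤ m := by omega
  have he1 : (2 - ((m+2:ℕ):ℤ)) = -(m:ℤ) := by push_cast; ring
  have he2 : (2 - ((m+2:ℕ):ℤ)) - 1 = -((m+1:ℕ):ℤ) := by push_cast; ring
  intro heq
  rw [hderiv R₁ hR₁, hderiv R₂ hR₂] at heq
  simp only [he1, he2, zpow_neg, zpow_natCast] at heq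
  rw [show a = (R₁ ^ 2 - R₂ ^ 2) /
      (2 * ((m+2:ℕ):ℝ) * ((R₁ ^ m)⁻¹ - (R₂ ^ m)⁻¹)) by
    simp only [a, he1, zpow_neg, zpow_natCast]] at heq
  have hD : (R₁ ^ m)⁻¹ - (R₂ ^ m)⁻¹ ≠ 0 := by
    have h5 : R₁ ^ m < R₂ ^ m := pow_lt_pow_left₀ hR₁₂ hR₁.le (by omega)
    have h6 : (R₂ ^ m)⁻¹ < (R₁ ^ m)⁻¹ := by
      exact inv_strictAnti₀ (by positivity) h5
    linarith
  have hz : ∀ r : ℝ, r ^ (-(m:ℤ) - 1) = (r ^ (m+1))⁻¹ := by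
    intro r
    rw [show (-(m:ℤ)-1) = -((m+1:ℕ):ℤ) by push_cast; ring, zpow_neg, zpow_natCast]
  field_simp at heq
  simp only [hz] at heq
  have hpow : R₁ ^ m < R₂ ^ m := pow_lt_pow_left₀ hR₁₂ hR₁.le (by omega)
  have hE : R₂ ^ m - R₁ ^ m ≠ 0 := by linarith
  field_simp [hR₁.ne', hR₂.ne', hE] at heq
  -- heq is now a polynomial identity; extract the essential equation
  have hfac : (2*((m:ℝ)+2)^2*(R₂^m - R₁^m)*(R₁^m * R₂^m)) *
      ((m:ℝ)*(R₂^2 - R₁^2)*(R₁^(m+1)+R₂^(m+1)) - 2*R₁*R₂*(R₁+R₂)*(R₂^m - R₁^m)) = 0 := by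
    push_cast at heq
    linear_combination -(2*((m:ℝ)+2)^2*(R₂^m - R₁^m)) * heq
  have hfacpos : (0:ℝ) < 2*((m:ℝ)+2)^2*(R₂^m - R₁^m)*(R₁^m * R₂^m) := by
    have h7 : (0:ℝ) < R₁^m * R₂^m := by positivity
    have h8 : (0:ℝ) < R₂^m - R₁^m := by linarith
    have h9 : (0:ℝ) < 2*((m:ℝ)+2)^2 := by positivity
    exact mul_pos (mul_pos h9 h8) h7
  have hfinal : (m:ℝ)*(R₂^2 - R₁^2)*(R₁^(m+1)+R₂^(m+1))
      = 2*R₁*R₂*(R₁+R₂)*(R₂^m - R₁^m) := by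
    have := (mul_eq_zero.mp hfac).resolve_left hfacpos.ne'
    linarith [this]
  have hkey := annulus_key m hm R₁ R₂ hR₁ hR₁₂
  have hkey2 := mul_lt_mul_of_pos_left hkey (show (0:ℝ) < R₁ + R₂ by linarith)
  nlinarith [hkey2, hfinal]
end

section
/- Let 0 < R₁ < R₂. Set a := (R₁² − R₂²)/(4·log(R₁/R₂)) and b := R₁²/4 − a·log R₁, and let U(r) := a·log r + b − r²/4. Then −U'(R₁) ≠ U'(R₂); that is, the outward normal derivative of the corresponding radial function u(x) = U(|x|) on the inner circle {|x| = R₁} differs from its outward normal derivative on the outer circle {|x| = R₂}. -/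
open Real Set

lemma log_lt_half_sub_inv {t : ℝ} (ht : 1 < t) :
    Real.log t < (t - t⁻¹) / 2 := by
  set f : ℝ → ℝ := fun x => (x - x⁻¹) / 2 - Real.log x with hf
  have hderiv : ∀ x ∈ interior (Set.Ici (1:ℝ)), 0 < deriv f x := by
    intro x hx
    rw [interior_Ici] at hx
    have hx0 : (0:ℝ) < x := lt_trans one_pos hx
    have h1 : HasDerivAt f ((1 - (-(x^2)⁻¹)) / 2 - x⁻¹) x := by
      have hinv : HasDerivAt (fun y : ℝ => y⁻¹) (-(x^2)⁻¹) x := by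
        simpa using hasDerivAt_inv (ne_of_gt hx0)
      exact (((hasDerivAt_id x).sub hinv).div_const 2).sub
        (Real.hasDerivAt_log (ne_of_gt hx0))
    rw [h1.deriv]
    have h2 : (1 - (-(x^2)⁻¹)) / 2 - x⁻¹ = (x - 1)^2 / (2 * x^2) := by
      field_simp
      ring
    rw [h2]
    have h3 : 0 < (x - 1)^2 := by
      have hx1 : 1 < x := Set.mem_Ioi.mp hx
      have : 0 < x - 1 := by linarith
      positivity
    positivity
  have hcont : ContinuousOn f (Set.Ici 1) := by
    apply ContinuousOn.sub
    · exact (continuousOn_id.sub (continuousOn_inv₀.mono (by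
        intro x hx; simp at hx ⊢; linarith))).div_const 2
    · exact Real.continuousOn_log.mono (by intro x hx; simp at hx ⊢; linarith)
  have hmono : StrictMonoOn f (Set.Ici 1) :=
    strictMonoOn_of_deriv_pos (convex_Ici 1) hcont hderiv
  have := hmono (Set.self_mem_Ici) (Set.mem_Ici.mpr ht.le) ht
  simp only [hf] at this
  simp at this
  linarith

theorem annulus_normal_derivatives_differ_dim_two (R₁ R₂ : ℝ)
    (hR₁ : 0 < R₁) (hR₁₂ : R₁ < R₂) :
    let a : ℝ := (R₁ ^ 2 - R₂ ^ 2) / (4 * Real.log (R₁ / R₂))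
    let b : ℝ := R₁ ^ 2 / 4 - a * Real.log R₁
    let U : ℝ → ℝ := fun r => a * Real.log r + b - r ^ 2 / 4
    (-deriv U R₁) ≠ deriv U R₂ := by
  intro a b U
  have hR₂ : 0 < R₂ := lt_trans hR₁ hR₁₂
  have hL : Real.log (R₁ / R₂) < 0 :=
    Real.log_neg (by positivity) ((div_lt_one hR₂).mpr hR₁₂)
  have hU : ∀ r : ℝ, 0 < r → deriv U r = a / r - r / 2 := by
    intro r hr
    have h1 : HasDerivAt U (a * r⁻¹ + 0 - (2 * r ^ 1) / 4) r := by
      exact (((Real.hasDerivAt_log (ne_of_gt hr)).const_mul a).add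
        (hasDerivAt_const r b)).sub ((hasDerivAt_pow 2 r).div_const 4)
    rw [h1.deriv]
    field_simp
    ring
  rw [hU R₁ hR₁, hU R₂ hR₂]
  have hadef : a = (R₁ ^ 2 - R₂ ^ 2) / (4 * Real.log (R₁ / R₂)) := rfl
  clear_value a b U
  intro h
  -- equality forces a = R₁ * R₂ / 2
  have hsum : 0 < R₁ + R₂ := by linarith
  have ha : a = R₁ * R₂ / 2 := by
    have h' : (2 * a) * (R₁ + R₂) = (R₁ * R₂) * (R₁ + R₂) := by
      field_simp at h
      nlinarith [h]
    have h'' : (2 * a) * (R₁ + R₂) = (2 * (R₁ * R₂ / 2)) * (R₁ + R₂) := by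
      rw [h']; ring
    have := mul_right_cancel₀ (ne_of_gt hsum) h''
    linarith
  -- key inequality
  have ht : 1 < R₂ / R₁ := (one_lt_div hR₁).mpr hR₁₂
  have hkey := log_lt_half_sub_inv ht
  have hloginv : Real.log (R₁ / R₂) = - Real.log (R₂ / R₁) := by
    rw [← Real.log_inv]
    congr 1
    field_simp
  have hLne : Real.log (R₁ / R₂) ≠ 0 := ne_of_lt hL
  have ha' : (R₁ ^ 2 - R₂ ^ 2) = (R₁ * R₂ / 2) * (4 * Real.log (R₁ / R₂)) := by
    have hden4 : (4 : ℝ) * Real.log (R₁ / R₂) ≠ 0 := by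
      intro hc
      apply hLne
      linarith [(by linarith [hc] : Real.log (R₁ / R₂) * 4 = 0)]
    have := hadef.symm.trans ha
    exact (div_eq_iff hden4).mp this
  rw [hloginv] at ha'
  have hinv : (R₂ / R₁)⁻¹ = R₁ / R₂ := by field_simp
  rw [hinv] at hkey
  have hq : Real.log (R₂ / R₁) < (R₂ / R₁ - R₁ / R₂) / 2 := hkey
  have hfrac : (R₂ / R₁ - R₁ / R₂) / 2 = (R₂ ^ 2 - R₁ ^ 2) / (2 * R₁ * R₂) := by
    field_simp
  rw [hfrac] at hq
  have hden : 0 < 2 * R₁ * R₂ := by positivity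
  have : Real.log (R₂ / R₁) * (2 * R₁ * R₂) < R₂ ^ 2 - R₁ ^ 2 :=
    (lt_div_iff₀ hden).mp hq
  nlinarith [ha', this]
end

section
/- Let N ≥ 2 be an integer and let 0 < R₁ < R₂. There is no function U, continuous on [R₁,R₂], continuously differentiable near R₁ and R₂ in [R₁,R₂], and twice differentiable on (R₁,R₂), such that U''(r) + ((N−1)/r)·U'(r) = −1 on (R₁,R₂), U(R₁) = U(R₂) = 0, and −U'(R₁) = U'(R₂). Equivalently, for every such U solving the boundary value problem one has U'(R₁) + U'(R₂) ≠ 0. -/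
open Set Metric
open Topology Filter

/-- endpoint derivative identification -/
lemma aux_endpoint (U F : ℝ → ℝ) (c d : ℝ) (hcd : c < d)
    (h1 : ContDiffOn ℝ 1 U (Icc c d)) (hF : ContinuousOn F (Icc c d))
    (heq : ∀ r ∈ Ioo c d, deriv U r = F r) (x : ℝ) (hx : x ∈ Icc c d) :
    derivWithin U (Icc c d) x = F x := by
  set g := derivWithin U (Icc c d) with hg
  have hud : UniqueDiffOn ℝ (Icc c d) := uniqueDiffOn_Icc hcd
  have hgc : ContinuousOn g (Icc c d) := h1.continuousOn_derivWithin hud le_rfl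
  have hne : (𝓝[Ioo c d] x).NeBot := by
    refine mem_closure_iff_nhdsWithin_neBot.1 ?_
    rw [closure_Ioo hcd.ne]
    exact hx
  have hsub : Ioo c d ⊆ Icc c d := Ioo_subset_Icc_self
  have h1' : Filter.Tendsto g (𝓝[Ioo c d] x) (𝓝 (g x)) :=
    (hgc x hx).mono_left (nhdsWithin_mono _ hsub)
  have h2' : Filter.Tendsto g (𝓝[Ioo c d] x) (𝓝 (F x)) := by
    have hFt : Filter.Tendsto F (𝓝[Ioo c d] x) (𝓝 (F x)) :=
      (hF x hx).mono_left (nhdsWithin_mono _ hsub)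
    refine hFt.congr' ?_
    filter_upwards [self_mem_nhdsWithin] with r hr
    have : g r = deriv U r := derivWithin_of_mem_nhds (Icc_mem_nhds hr.1 hr.2)
    rw [this, heq r hr]
  exact tendsto_nhds_unique h1' h2'

lemma aux_trapezoid (g : ℝ → ℝ) (a b : ℝ) (ha : 0 < a) (hab : a < b)
    (hconv : StrictConvexOn ℝ (Ioi 0) g) (hgc : ContinuousOn g (Icc a b)) :
    ∫ r in a..b, g r < (b - a) * (g a + g b) / 2 := by
  set c : ℝ := (g b - g a) / (b - a) with hc
  set L : ℝ → ℝ := fun r => g a - c * a + c * r with hL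
  have hba : (0:ℝ) < b - a := by linarith
  have hLc : ContinuousOn L (Icc a b) := by fun_prop
  have hlt : ∀ r ∈ Ioo a b, g r < L r := by
    intro r hr
    have ht : 0 < (b - r) / (b - a) := by
      apply div_pos <;> [linarith [hr.2]; linarith]
    have hs : 0 < (r - a) / (b - a) := by
      apply div_pos <;> [linarith [hr.1]; linarith]
    have hts : (b - r) / (b - a) + (r - a) / (b - a) = 1 := by
      field_simp
      ring
    have := hconv.2 (mem_Ioi.2 ha) (mem_Ioi.2 (lt_trans ha hab)) hab.ne ht hs hts
    have harg : ((b - r) / (b - a)) • a + ((r - a) / (b - a)) • b = r := by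
      simp only [smul_eq_mul]; field_simp; ring
    rw [harg] at this
    calc g r < ((b - r) / (b - a)) • g a + ((r - a) / (b - a)) • g b := this
      _ = L r := by simp only [smul_eq_mul, hL, hc]; field_simp; ring
  have hint : (∫ r in a..b, g r) < ∫ r in a..b, L r := by
    apply intervalIntegral.integral_lt_integral_of_continuousOn_of_le_of_exists_lt hab hgc hLc
    · intro x hx
      rcases eq_or_lt_of_le hx.2 with h | h
      · have hLb : L b = g b := by simp only [hL, hc]; field_simp; ring
        rw [h, hLb]
      · exact (hlt x ⟨hx.1, h⟩).le
    · refine ⟨(a + b)/2, ⟨by linarith, by linarith⟩, hlt _ ⟨by linarith, by linarith⟩⟩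
  have hLval : (∫ r in a..b, L r) = (b - a) * (g a + g b) / 2 := by
    have : (∫ r in a..b, L r) = (∫ r in a..b, (g a - c * a)) + ∫ r in a..b, c * r := by
      rw [← intervalIntegral.integral_add intervalIntegrable_const
        ((intervalIntegral.intervalIntegrable_id (μ := MeasureTheory.volume)).const_mul c)]
    rw [this, intervalIntegral.integral_const, intervalIntegral.integral_const_mul,
      integral_id, smul_eq_mul, hc]
    field_simp
    ring
  linarith [hint, hLval.le, hLval.ge]
theorem annulus_no_overdetermined_solution (N : ℕ) (hN : 2 ≤ N)
    (R₁ R₂ : ℝ) (hR₁ : 0 < R₁) (hR₁₂ : R₁ < R₂) (U : ℝ → ℝ)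
    (hc : ContinuousOn U (Icc R₁ R₂))
    (hC1 : ∃ ε > 0, ContDiffOn ℝ 1 U (Icc R₁ R₂ ∩ ball R₁ ε) ∧
      ContDiffOn ℝ 1 U (Icc R₁ R₂ ∩ ball R₂ ε))
    (hd : ∀ r ∈ Ioo R₁ R₂, DifferentiableAt ℝ U r ∧ DifferentiableAt ℝ (deriv U) r)
    (hode : ∀ r ∈ Ioo R₁ R₂,
      deriv (deriv U) r + (((N : ℝ) - 1) / r) * deriv U r = -1)
    (hb₁ : U R₁ = 0) (hb₂ : U R₂ = 0) :
    derivWithin U (Icc R₁ R₂) R₁ + derivWithin U (Icc R₁ R₂) R₂ ≠ 0 := by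
  have hNR : (2:ℝ) ≤ (N:ℝ) := by exact_mod_cast hN
  have hNne : (N:ℝ) ≠ 0 := by linarith
  set W : ℝ → ℝ := fun r => r ^ ((N:ℤ) - 1) * deriv U r + r ^ (N:ℤ) / N with hWdef
  -- Step 1: W' = 0 on the open interval
  have hW : ∀ r ∈ Ioo R₁ R₂, HasDerivAt W 0 r := by
    intro r hr
    have hr0 : (0:ℝ) < r := lt_trans hR₁ hr.1
    have hrne : r ≠ 0 := hr0.ne'
    have h1 : HasDerivAt (fun x : ℝ => x ^ ((N:ℤ) - 1))
        ((((N:ℤ) - 1 : ℤ) : ℝ) * r ^ ((N:ℤ) - 1 - 1)) r :=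
      hasDerivAt_zpow _ _ (Or.inl hrne)
    have h2 : HasDerivAt (deriv U) (deriv (deriv U) r) r := (hd r hr).2.hasDerivAt
    have h4 : HasDerivAt (fun x : ℝ => x ^ (N:ℤ))
        ((((N:ℤ) : ℤ) : ℝ) * r ^ ((N:ℤ) - 1)) r := hasDerivAt_zpow _ _ (Or.inl hrne)
    have hsum := (h1.mul h2).add (h4.div_const (N:ℝ))
    have hval : (((N:ℤ) - 1 : ℤ) : ℝ) * r ^ ((N:ℤ) - 1 - 1) * deriv U r
        + r ^ ((N:ℤ) - 1) * deriv (deriv U) r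
        + (((N:ℤ) : ℤ) : ℝ) * r ^ ((N:ℤ) - 1) / (N:ℝ) = 0 := by
      have hode' := hode r hr
      have hd2 : deriv (deriv U) r = -1 - (((N:ℝ) - 1) / r) * deriv U r := by linarith
      have hzz : r ^ ((N:ℤ) - 1) = r ^ ((N:ℤ) - 1 - 1) * r := by
        rw [← zpow_add_one₀ hrne]; norm_num
      rw [hd2, hzz]
      push_cast
      field_simp
      ring
    have : HasDerivAt W ((((N:ℤ) - 1 : ℤ) : ℝ) * r ^ ((N:ℤ) - 1 - 1) * deriv U r
        + r ^ ((N:ℤ) - 1) * deriv (deriv U) r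
        + (((N:ℤ) : ℤ) : ℝ) * r ^ ((N:ℤ) - 1) / (N:ℝ)) r := hsum
    rwa [hval] at this
  -- Step 2: W is constant on the open interval
  have hWc : ∀ x ∈ Ioo R₁ R₂, ∀ y ∈ Ioo R₁ R₂, x ≤ y → W y = W x := by
    intro x hx y hy hxy
    have hsub : Icc x y ⊆ Ioo R₁ R₂ := fun z hz => ⟨lt_of_lt_of_le hx.1 hz.1,
      lt_of_le_of_lt hz.2 hy.2⟩
    have hcont : ContinuousOn W (Icc x y) := fun z hz =>
      (hW z (hsub hz)).continuousAt.continuousWithinAt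
    have hderiv : ∀ z ∈ Ico x y, HasDerivWithinAt W 0 (Ici z) z := fun z hz =>
      (hW z (hsub (Ico_subset_Icc_self hz))).hasDerivWithinAt
    exact constant_of_has_deriv_right_zero hcont hderiv y ⟨hxy, le_refl y⟩
  set m : ℝ := (R₁ + R₂) / 2 with hm
  have hmI : m ∈ Ioo R₁ R₂ := ⟨by simp only [hm]; linarith, by simp only [hm]; linarith⟩
  set C : ℝ := W m with hC
  have hWC : ∀ r ∈ Ioo R₁ R₂, W r = C := by
    intro r hr
    rcases le_total r m with h | h
    · exact (hWc r hr m hmI h).symm ▸ rfl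
    · exact hWc m hmI r hr h
  -- Step 3: explicit formula for deriv U
  set F : ℝ → ℝ := fun r => C * r ^ ((1:ℤ) - N) - r / N with hF
  have hdU : ∀ r ∈ Ioo R₁ R₂, deriv U r = F r := by
    intro r hr
    have hr0 : (0:ℝ) < r := lt_trans hR₁ hr.1
    have hrne : r ≠ 0 := hr0.ne'
    have hWr := hWC r hr
    have hzne : r ^ ((N:ℤ) - 1) ≠ 0 := zpow_ne_zero _ hrne
    apply mul_left_cancel₀ hzne
    have e1 : r ^ ((N:ℤ) - 1) * r ^ ((1:ℤ) - N) = 1 := by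
      rw [← zpow_add₀ hrne]; norm_num
    have e2 : r ^ ((N:ℤ) - 1) * r = r ^ (N:ℤ) := by
      rw [← zpow_add_one₀ hrne]; norm_num
    have : r ^ ((N:ℤ) - 1) * F r = C - r ^ (N:ℤ) / N := by
      simp only [hF]
      rw [mul_sub]
      rw [show r ^ ((N:ℤ) - 1) * (C * r ^ ((1:ℤ) - N))
          = C * (r ^ ((N:ℤ) - 1) * r ^ ((1:ℤ) - N)) by ring, e1, mul_one]
      rw [show r ^ ((N:ℤ) - 1) * (r / (N:ℝ)) = (r ^ ((N:ℤ) - 1) * r) / (N:ℝ) by ring, e2]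
    rw [this]
    have : r ^ ((N:ℤ) - 1) * deriv U r = C - r ^ (N:ℤ) / N := by
      have := hWr
      simp only [hWdef] at this
      linarith
    rw [this]
  -- continuity facts
  have hgcont : ContinuousOn (fun r : ℝ => r ^ ((1:ℤ) - N)) (Icc R₁ R₂) := by
    intro r hr
    exact ((hasDerivAt_zpow _ r (Or.inl (lt_of_lt_of_le hR₁ hr.1).ne')).differentiableAt.continuousAt).continuousWithinAt
  have hFcont : ContinuousOn F (Icc R₁ R₂) := by
    apply ContinuousOn.sub (hgcont.const_smul C) ((continuousOn_id).div_const _)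
  -- Step 5: FTC
  have hFTC : ∫ r in R₁..R₂, F r = 0 := by
    have := intervalIntegral.integral_eq_sub_of_hasDeriv_right_of_le hR₁₂.le hc
      (f' := F) (fun x hx => by
        have h := (hd x hx).1.hasDerivAt
        rw [hdU x hx] at h
        exact h.hasDerivWithinAt)
      (hFcont.intervalIntegrable_of_Icc hR₁₂.le)
    rw [this, hb₁, hb₂]; ring
  -- Step 6: split the integral
  have hsplit : C * (∫ r in R₁..R₂, r ^ ((1:ℤ) - N)) - (R₂^2 - R₁^2) / 2 / N = 0 := by
    have hgint : IntervalIntegrable (fun r : ℝ => C * r ^ ((1:ℤ) - N)) MeasureTheory.volume R₁ R₂ :=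
      ((hgcont.const_smul C).intervalIntegrable_of_Icc hR₁₂.le)
    have hrint : IntervalIntegrable (fun r : ℝ => r / N) MeasureTheory.volume R₁ R₂ :=
      (((continuousOn_id (s := Icc R₁ R₂)).div_const _).intervalIntegrable_of_Icc hR₁₂.le)
    have : ∫ r in R₁..R₂, F r =
        (∫ r in R₁..R₂, C * r ^ ((1:ℤ) - N)) - ∫ r in R₁..R₂, r / N := by
      simp only [hF]
      exact intervalIntegral.integral_sub hgint hrint
    rw [hFTC] at this
    rw [intervalIntegral.integral_const_mul, intervalIntegral.integral_div, integral_id] at this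
    linarith
  -- Step 7: endpoint derivatives
  obtain ⟨ε, hε, hC1a, hC1b⟩ := hC1
  set d : ℝ := min ε (R₂ - R₁) / 2 with hdd
  have hd0 : 0 < d := by
    apply div_pos _ (by norm_num)
    exact lt_min hε (by linarith)
  have hdε : d < ε := by
    have : min ε (R₂ - R₁) ≤ ε := min_le_left _ _
    simp only [hdd]; linarith
  have hdb : d ≤ (R₂ - R₁) / 2 := by
    have : min ε (R₂ - R₁) ≤ R₂ - R₁ := min_le_right _ _
    simp only [hdd]; linarith
  have hend₁ : derivWithin U (Icc R₁ R₂) R₁ = F R₁ := by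
    have hset : Icc R₁ R₂ =ᶠ[𝓝 R₁] Icc R₁ (R₁ + d) := by
      rw [Filter.eventuallyEq_set]
      filter_upwards [Metric.ball_mem_nhds R₁ hd0] with x hx
      rw [Real.ball_eq_Ioo] at hx
      constructor
      · rintro ⟨h1, _⟩; exact ⟨h1, (hx.2).le⟩
      · rintro ⟨h1, h2⟩; exact ⟨h1, by linarith⟩
    rw [derivWithin_congr_set hset]
    apply aux_endpoint U F R₁ (R₁ + d) (by linarith)
    · apply hC1a.mono
      intro x hx
      refine ⟨⟨hx.1, by linarith [hx.2]⟩, ?_⟩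
      rw [mem_ball, Real.dist_eq, abs_lt]
      constructor <;> [linarith [hx.1]; linarith [hx.2]]
    · exact hFcont.mono (fun x hx => ⟨hx.1, by linarith [hx.2]⟩)
    · intro r hr
      exact hdU r ⟨hr.1, by linarith [hr.2]⟩
    · exact ⟨le_refl _, by linarith⟩
  have hend₂ : derivWithin U (Icc R₁ R₂) R₂ = F R₂ := by
    have hset : Icc R₁ R₂ =ᶠ[𝓝 R₂] Icc (R₂ - d) R₂ := by
      rw [Filter.eventuallyEq_set]
      filter_upwards [Metric.ball_mem_nhds R₂ hd0] with x hx
      rw [Real.ball_eq_Ioo] at hx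
      constructor
      · rintro ⟨_, h2⟩; exact ⟨(hx.1).le, h2⟩
      · rintro ⟨h1, h2⟩; exact ⟨by linarith, h2⟩
    rw [derivWithin_congr_set hset]
    apply aux_endpoint U F (R₂ - d) R₂ (by linarith)
    · apply hC1b.mono
      intro x hx
      refine ⟨⟨by linarith [hx.1], hx.2⟩, ?_⟩
      rw [mem_ball, Real.dist_eq, abs_lt]
      constructor <;> [linarith [hx.1]; linarith [hx.2]]
    · exact hFcont.mono (fun x hx => ⟨by linarith [hx.1], hx.2⟩)
    · intro r hr
      exact hdU r ⟨by linarith [hr.1], hr.2⟩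
    · exact ⟨by linarith, le_refl _⟩
  -- Step 8: conclusion
  rw [hend₁, hend₂]
  intro h
  set ga : ℝ := R₁ ^ ((1:ℤ) - N) with hga
  set gb : ℝ := R₂ ^ ((1:ℤ) - N) with hgb
  have hga0 : 0 < ga := zpow_pos hR₁ _
  have hgb0 : 0 < gb := zpow_pos (lt_trans hR₁ hR₁₂) _
  have e1 : C * (ga + gb) = (R₁ + R₂) / N := by
    simp only [hF, hga, hgb] at h ⊢
    field_simp at h ⊢
    linarith
  have hCpos : 0 < C := by
    have h1 : 0 < (R₁ + R₂) / N := by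
      apply div_pos (by linarith) (by linarith)
    have h2 : 0 < C * (ga + gb) := by rw [e1]; exact h1
    rcases mul_pos_iff.1 h2 with ⟨h3, _⟩ | ⟨_, h4⟩
    · exact h3
    · linarith
  have e3 : (∫ r in R₁..R₂, r ^ ((1:ℤ) - N)) < (R₂ - R₁) * (ga + gb) / 2 := by
    apply aux_trapezoid _ _ _ hR₁ hR₁₂ _ hgcont
    apply strictConvexOn_zpow
    · omega
    · omega
  have e4 : C * (∫ r in R₁..R₂, r ^ ((1:ℤ) - N)) < C * ((R₂ - R₁) * (ga + gb) / 2) :=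
    mul_lt_mul_of_pos_left e3 hCpos
  have e5 : C * ((R₂ - R₁) * (ga + gb) / 2) = (R₂ - R₁) / 2 * (C * (ga + gb)) := by ring
  rw [e5, e1] at e4
  have e6 : (R₂ - R₁) / 2 * ((R₁ + R₂) / N) = (R₂^2 - R₁^2) / 2 / N := by
    field_simp; ring
  rw [e6] at e4
  linarith
end

section
/- For every integer N ≥ 3 and all real numbers s, t with 0 < s < t, the strict inequality (N−2)·(t−s)·(s^{1−N} + t^{1−N}) > 2·(s^{2−N} − t^{2−N}) holds. -/
/-- Bernoulli-type bound: `s * t^n ≥ s^(n+1) + n * s^n * (t - s)` for `0 < s < t`. -/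
lemma bern_aux (n : ℕ) (s t : ℝ) (hs : 0 < s) (hst : s < t) :
    s ^ (n + 1) + n * s ^ n * (t - s) ≤ s * t ^ n := by
  induction n with
  | zero => simp
  | succ n ih =>
    have hsn : (0:ℝ) < s ^ n := pow_pos hs n
    have ht : (0:ℝ) < t := hs.trans hst
    have h2 : t * (s ^ (n + 1) + n * s ^ n * (t - s)) ≤ t * (s * t ^ n) :=
      mul_le_mul_of_nonneg_left ih ht.le
    simp only [pow_succ] at h2 ⊢
    push_cast
    nlinarith [mul_nonneg (mul_nonneg (Nat.cast_nonneg (α := ℝ) n) hsn.le)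
      (sq_nonneg (t - s))]

/-- Polynomial core: `2st(t^m - s^m) < m (t-s)(s^{m+1}+t^{m+1})` for `m ≥ 1`. -/
lemma core_aux (m : ℕ) (hm : 1 ≤ m) (s t : ℝ) (hs : 0 < s) (hst : s < t) :
    2 * s * t * (t ^ m - s ^ m) < m * (t - s) * (s ^ (m + 1) + t ^ (m + 1)) := by
  induction m with
  | zero => omega
  | succ m ih =>
    have ht : (0:ℝ) < t := hs.trans hst
    have hts : (0:ℝ) < t - s := sub_pos.mpr hst
    rcases Nat.eq_or_lt_of_le hm with h1 | h1
    · -- m + 1 = 1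
      have : m = 0 := by omega
      subst this
      push_cast
      nlinarith [mul_pos hts (mul_pos hts hts), mul_pos hs ht]
    · have hm' : 1 ≤ m := by omega
      have IH := ih hm'
      have hsm : (0:ℝ) < s ^ m := pow_pos hs m
      have hb := bern_aux (m + 1) s t hs hst
      have hb2 : t * (s ^ (m + 1 + 1) + ((m:ℝ)+1) * s ^ (m + 1) * (t - s)) ≤
          t * (s * t ^ (m + 1)) := by
        refine mul_le_mul_of_nonneg_left ?_ ht.le
        push_cast at hb
        exact hb
      -- key: (m+2) t s^{m+1} ≤ (m+1) s^{m+2} + t^{m+2}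
      have key : (((m:ℝ) + 2) * t * s ^ (m + 1)) * s ≤
          (((m:ℝ) + 1) * s ^ (m + 1 + 1) + t ^ (m + 1 + 1)) * s := by
        simp only [pow_succ] at hb2 ⊢
        nlinarith [mul_nonneg (mul_nonneg (mul_nonneg
          (by positivity : (0:ℝ) ≤ (m:ℝ) + 1) hsm.le) hs.le) (sq_nonneg (s - t))]
      have key' : ((m:ℝ) + 2) * t * s ^ (m + 1) ≤
          ((m:ℝ) + 1) * s ^ (m + 1 + 1) + t ^ (m + 1 + 1) :=
        (mul_le_mul_iff_left₀ hs).mp key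
      have IHt : t * (2 * s * t * (t ^ m - s ^ m)) <
          t * ((m:ℝ) * (t - s) * (s ^ (m + 1) + t ^ (m + 1))) :=
        (mul_lt_mul_iff_right₀ ht).mpr IH
      have hkey := mul_le_mul_of_nonneg_left key' hts.le
      push_cast
      simp only [pow_succ] at IHt hkey ⊢
      nlinarith [IHt, hkey]

theorem key_inequality_dim_ge_three (N : ℕ) (hN : 3 ≤ N) (s t : ℝ)
    (hs : 0 < s) (hst : s < t) :
    2 * (s ^ (2 - (N : ℤ)) - t ^ (2 - (N : ℤ))) <
      ((N : ℝ) - 2) * (t - s) * (s ^ (1 - (N : ℤ)) + t ^ (1 - (N : ℤ))) := by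
  obtain ⟨m, rfl⟩ : ∃ m, N = m + 2 := ⟨N - 2, by omega⟩
  have hm : 1 ≤ m := by omega
  have ht : (0:ℝ) < t := hs.trans hst
  have e2 : (2 - ((m + 2 : ℕ) : ℤ)) = -(m : ℤ) := by push_cast; ring
  have e1 : (1 - ((m + 2 : ℕ) : ℤ)) = -((m + 1 : ℕ) : ℤ) := by push_cast; ring
  simp only [e1, e2, zpow_neg, zpow_natCast]
  have eN : ((m + 2 : ℕ) : ℝ) - 2 = (m : ℝ) := by push_cast; ring
  rw [eN]
  have key := core_aux m hm s t hs hst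
  rw [← sub_pos]
  have hden : (0:ℝ) < s ^ (m + 1) * t ^ (m + 1) := by positivity
  have hrw : (m:ℝ) * (t - s) * ((s ^ (m + 1))⁻¹ + (t ^ (m + 1))⁻¹) -
      2 * ((s ^ m)⁻¹ - (t ^ m)⁻¹) =
      ((m:ℝ) * (t - s) * (s ^ (m + 1) + t ^ (m + 1)) - 2 * s * t * (t ^ m - s ^ m)) /
        (s ^ (m + 1) * t ^ (m + 1)) := by
    field_simp
    ring
  rw [hrw]
  exact div_pos (by linarith) hden
end

section
/- Let N ≥ 2 be an integer, ε > 0 and c ∈ ℝ. Write points of ℝ^N as (ξ, η) with ξ ∈ ℝ^{N−1} and η ∈ ℝ. Let f : ℝ^{N−1} → ℝ be C² on {|ξ| < ε} with f(0) = 0 and ∇f(0) = 0, and let u : ℝ^{N−1} × ℝ → ℝ be C² on a neighborhood of P := (0, 0). Assume that for all |ξ| < ε: (a) u(ξ, f(ξ)) = 0, and (b) −∇_ξ u(ξ, f(ξ))·∇f(ξ) + ∂_η u(ξ, f(ξ)) = c·√(1 + |∇f(ξ)|²). Then ∂²u/∂ξ_i∂η (P) = 0 for every i = 1, …, N−1.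 -/
open Metric

theorem neumann_condition_kills_mixed_derivatives (N : ℕ) (hN : 2 ≤ N)
    (ε : ℝ) (hε : 0 < ε) (c : ℝ)
    (f : EuclideanSpace ℝ (Fin (N - 1)) → ℝ)
    (hf : ContDiffOn ℝ 2 f (ball 0 ε))
    (hf0 : f 0 = 0) (hdf0 : fderiv ℝ f 0 = 0)
    (u : EuclideanSpace ℝ (Fin (N - 1)) × ℝ → ℝ)
    (hu : ContDiffAt ℝ 2 u ((0 : EuclideanSpace ℝ (Fin (N - 1))), (0 : ℝ)))
    (hbd : ∀ ξ : EuclideanSpace ℝ (Fin (N - 1)), ‖ξ‖ < ε → u (ξ, f ξ) = 0)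
    (hneu : ∀ ξ : EuclideanSpace ℝ (Fin (N - 1)), ‖ξ‖ < ε →
      -(fderiv ℝ u (ξ, f ξ) (gradient f ξ, (0 : ℝ))) +
          fderiv ℝ u (ξ, f ξ) ((0 : EuclideanSpace ℝ (Fin (N - 1))), (1 : ℝ)) =
        c * Real.sqrt (1 + ‖gradient f ξ‖ ^ 2)) :
    ∀ i : Fin (N - 1),
      fderiv ℝ (fun p => fderiv ℝ u p ((0 : EuclideanSpace ℝ (Fin (N - 1))), (1 : ℝ)))
        ((0 : EuclideanSpace ℝ (Fin (N - 1))), (0 : ℝ))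
        (EuclideanSpace.single i 1, (0 : ℝ)) = 0 := by
  intro i
  set P : EuclideanSpace ℝ (Fin (N - 1)) × ℝ := (0, 0) with hP
  set φ : EuclideanSpace ℝ (Fin (N - 1)) → EuclideanSpace ℝ (Fin (N - 1)) × ℝ :=
    fun ξ => (ξ, f ξ) with hφ
  have hφ0 : φ 0 = P := by simp [hφ, hP, hf0]
  have hball : ball (0 : EuclideanSpace ℝ (Fin (N - 1))) ε ∈
      nhds (0 : EuclideanSpace ℝ (Fin (N - 1))) := isOpen_ball.mem_nhds (mem_ball_self hε)
  have hf2 : ContDiffAt ℝ 2 f 0 := hf.contDiffAt hball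
  have hfd : DifferentiableAt ℝ f 0 := hf2.differentiableAt two_ne_zero
  have hf' : ContDiffAt ℝ 1 (fderiv ℝ f) 0 := hf2.fderiv_right (m := 1) (by norm_num)
  have hfd' : DifferentiableAt ℝ (fderiv ℝ f) 0 := hf'.differentiableAt one_ne_zero
  -- gradient facts
  have hg0 : gradient f 0 = 0 := by
    unfold gradient
    rw [hdf0]
    simp
  have hgd : DifferentiableAt ℝ (gradient f) 0 := by
    have h : gradient f = fun ξ =>
        (InnerProductSpace.toDual ℝ (EuclideanSpace ℝ (Fin (N - 1)))).symm (fderiv ℝ f ξ) := rfl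
    rw [h]
    exact ((InnerProductSpace.toDual ℝ
      (EuclideanSpace ℝ (Fin (N - 1)))).symm.differentiable.differentiableAt).comp 0 hfd'
  -- φ differentiable, with derivative v ↦ (v, 0)
  have hφd : DifferentiableAt ℝ φ 0 := differentiableAt_fun_id.prodMk hfd
  have hφderiv : ∀ v : EuclideanSpace ℝ (Fin (N - 1)), fderiv ℝ φ 0 v = (v, 0) := by
    intro v
    have h : fderiv ℝ φ 0 = (fderiv ℝ (fun ξ : EuclideanSpace ℝ (Fin (N - 1)) => ξ) 0).prod
        (fderiv ℝ f 0) := DifferentiableAt.fderiv_prodMk differentiableAt_fun_id hfd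
    rw [h, hdf0]
    simp
  -- u facts
  have hud : DifferentiableAt ℝ u P := hu.differentiableAt two_ne_zero
  have hu' : ContDiffAt ℝ 1 (fderiv ℝ u) P := hu.fderiv_right (m := 1) (by norm_num)
  have hud' : DifferentiableAt ℝ (fderiv ℝ u) P := hu'.differentiableAt one_ne_zero
  -- Dirichlet condition: horizontal derivatives of u vanish at P
  have hDir : ∀ v : EuclideanSpace ℝ (Fin (N - 1)), fderiv ℝ u P (v, 0) = 0 := by
    have hcomp : fderiv ℝ (u ∘ φ) 0 = (fderiv ℝ u (φ 0)).comp (fderiv ℝ φ 0) :=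
      fderiv_comp (x := 0) (hφ0 ▸ hud) hφd
    have hzero : fderiv ℝ (u ∘ φ) 0 = 0 := by
      have heq : (u ∘ φ) =ᶠ[nhds 0] fun _ => (0 : ℝ) :=
        Filter.eventually_of_mem hball fun ξ hξ => hbd ξ (mem_ball_zero_iff.mp hξ)
      rw [heq.fderiv_eq, fderiv_fun_const]
      rfl
    intro v
    have h2 := congrArg (fun (L : EuclideanSpace ℝ (Fin (N - 1)) →L[ℝ] ℝ) => L v)
      (hzero.symm.trans hcomp)
    simpa [hφ0, hφderiv v] using h2.symm
  -- the map p ↦ fderiv u p (0,1)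
  have hLd : DifferentiableAt ℝ
      (fun p => fderiv ℝ u p ((0 : EuclideanSpace ℝ (Fin (N - 1))), (1 : ℝ))) P :=
    hud'.clm_apply (differentiableAt_const _)
  -- chain rule for G := ξ ↦ fderiv u (φ ξ) (0,1)
  have hchain := fderiv_comp (𝕜 := ℝ)
      (g := fun p => fderiv ℝ u p ((0 : EuclideanSpace ℝ (Fin (N - 1))), (1 : ℝ)))
      (x := 0) (hφ0 ▸ hLd) hφd
  rw [hφ0] at hchain
  simp only [Function.comp_def] at hchain
  -- target equals fderiv G 0 (single i 1)
  have htarget : fderiv ℝ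
      (fun p => fderiv ℝ u p ((0 : EuclideanSpace ℝ (Fin (N - 1))), (1 : ℝ))) P
      (EuclideanSpace.single i 1, (0 : ℝ)) =
      fderiv ℝ (fun ξ => fderiv ℝ u (φ ξ) ((0 : EuclideanSpace ℝ (Fin (N - 1))), (1 : ℝ))) 0
        (EuclideanSpace.single i 1) := by
    rw [hchain]
    simp [hφderiv]
  rw [htarget]
  -- rewrite G as A + B near 0
  have hGeq : (fun ξ => fderiv ℝ u (φ ξ) ((0 : EuclideanSpace ℝ (Fin (N - 1))), (1 : ℝ)))
      =ᶠ[nhds (0 : EuclideanSpace ℝ (Fin (N - 1)))]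
      fun ξ => c * Real.sqrt (1 + ‖gradient f ξ‖ ^ 2) +
        fderiv ℝ u (φ ξ) (gradient f ξ, (0 : ℝ)) := by
    refine Filter.eventually_of_mem hball fun ξ hξ => ?_
    have h3 := hneu ξ (mem_ball_zero_iff.mp hξ)
    simp only [hφ]
    linarith
  rw [hGeq.fderiv_eq]
  -- A := ξ ↦ c * sqrt (1 + ‖gradient f ξ‖²) has derivative 0 at 0
  have hnsq : HasFDerivAt (fun ξ => ‖gradient f ξ‖ ^ 2)
      (0 : EuclideanSpace ℝ (Fin (N - 1)) →L[ℝ] ℝ) 0 := by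
    have hinner : HasFDerivAt (fun ξ => (inner ℝ (gradient f ξ) (gradient f ξ) : ℝ))
        ((fderivInnerCLM ℝ (gradient f 0, gradient f 0)).comp
          ((fderiv ℝ (gradient f) 0).prod (fderiv ℝ (gradient f) 0))) 0 :=
      HasFDerivAt.inner ℝ hgd.hasFDerivAt hgd.hasFDerivAt
    have h0 : ((fderivInnerCLM ℝ (gradient f 0, gradient f 0)).comp
        ((fderiv ℝ (gradient f) 0).prod (fderiv ℝ (gradient f) 0))) = 0 := by
      ext v
      simp [hg0, fderivInnerCLM]
    rw [h0] at hinner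
    have h1 : (fun ξ => (inner ℝ (gradient f ξ) (gradient f ξ) : ℝ)) =
        fun ξ => ‖gradient f ξ‖ ^ 2 := by
      funext ξ
      exact real_inner_self_eq_norm_sq _
    rwa [h1] at hinner
  have hAd : HasFDerivAt (fun ξ => c * Real.sqrt (1 + ‖gradient f ξ‖ ^ 2))
      (0 : EuclideanSpace ℝ (Fin (N - 1)) →L[ℝ] ℝ) 0 := by
    have hs : HasFDerivAt (fun ξ => 1 + ‖gradient f ξ‖ ^ 2)
        (0 : EuclideanSpace ℝ (Fin (N - 1)) →L[ℝ] ℝ) 0 := hnsq.const_add 1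
    have hsq : HasDerivAt Real.sqrt (1 / (2 * Real.sqrt (1 + ‖gradient f 0‖ ^ 2)))
        (1 + ‖gradient f 0‖ ^ 2) := by
      apply Real.hasDerivAt_sqrt
      simp [hg0]
    have h4 := (hsq.comp_hasFDerivAt 0 hs).const_mul c
    simpa using h4
  -- B := ξ ↦ fderiv u (φ ξ) (gradient f ξ, 0)
  have hcd : DifferentiableAt ℝ (fun ξ => fderiv ℝ u (φ ξ)) 0 :=
    (hφ0 ▸ hud').comp 0 hφd
  have hvd : DifferentiableAt ℝ
      (fun ξ => ((gradient f ξ, (0 : ℝ)) : EuclideanSpace ℝ (Fin (N - 1)) × ℝ)) 0 :=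
    hgd.prodMk (differentiableAt_const _)
  have hsum := fderiv_fun_add (𝕜 := ℝ) (hAd.differentiableAt) (hcd.clm_apply hvd)
  rw [hsum, ContinuousLinearMap.add_apply, hAd.fderiv, ContinuousLinearMap.zero_apply]
  rw [fderiv_clm_apply hcd hvd]
  have hv0 : ((gradient f 0, (0 : ℝ)) : EuclideanSpace ℝ (Fin (N - 1)) × ℝ) = 0 := by
    simp [hg0]
  have hvderiv : fderiv ℝ
      (fun ξ => ((gradient f ξ, (0 : ℝ)) : EuclideanSpace ℝ (Fin (N - 1)) × ℝ)) 0 =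
      (fderiv ℝ (gradient f) 0).prod 0 := by
    have h5 := DifferentiableAt.fderiv_prodMk hgd (differentiableAt_const (0 : ℝ))
    simpa using h5
  rw [ContinuousLinearMap.add_apply, ContinuousLinearMap.flip_apply, hv0,
    ContinuousLinearMap.comp_apply, hvderiv]
  simp only [map_zero, ContinuousLinearMap.prod_apply, ContinuousLinearMap.zero_apply]
  rw [zero_add, hφ0, add_zero]
  exact hDir _
end
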